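/- The number of conjugacy classes of simple n-braids of length i equals P(i + min(i, n-i), min(i, n-i)), the number of partitions of i + min(i,n-i) into exactly min(i,n-i) parts. -/
import Mathlib

/-- `P m k` is the number of partitions of `m` into exactly `k` (positive) parts. -/
def P (m k : ℕ) : ℕ :=
  (Finset.univ.filter fun p : Nat.Partition m => p.parts.card = k).card

/-- The number of conjugacy classes of simple `n`-braids of length `i` equals
`P(i + min(i, n-i), min(i, n-i))`. Conjugacy classes of simple `n`-braids are in bijection
with multisets `A` of integers `≥ 2` with sum `≤ n`, the length of the corresponding braid
being `(Σ A) - |A| = i`. -/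
theorem conjugacy_classes_simple_braids (n i : ℕ) (hi : i < n) :
    {A : Multiset ℕ | (∀ a ∈ A, 2 ≤ a) ∧
        A.sum = i + Multiset.card A ∧ A.sum ≤ n}.ncard
      = P (i + min i (n - i)) (min i (n - i)) := by
  classical
  set k := min i (n - i) with hkdef
  have hik : i + k ≤ n := by omega
  have hcard : ∀ A : Multiset ℕ, (∀ a ∈ A, 2 ≤ a) → A.sum = i + Multiset.card A →
      A.sum ≤ n → Multiset.card A ≤ k := by
    intro A h2 hsum hn
    have h2r : Multiset.card A • 2 ≤ A.sum := Multiset.card_nsmul_le_sum h2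
    simp only [smul_eq_mul] at h2r
    omega
  let e : {A : Multiset ℕ // (∀ a ∈ A, 2 ≤ a) ∧ A.sum = i + Multiset.card A ∧ A.sum ≤ n} ≃
      {p : Nat.Partition (i + k) // p.parts.card = k} :=
  { toFun := fun A =>
      ⟨⟨A.1 + Multiset.replicate (k - Multiset.card A.1) 1,
        by
          intro a ha
          rcases Multiset.mem_add.mp ha with h | h
          · exact lt_of_lt_of_le (by norm_num) (A.2.1 a h)
          · rw [Multiset.eq_of_mem_replicate h]; norm_num,
        by
          have hr := hcard A.1 A.2.1 A.2.2.1 A.2.2.2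
          rw [Multiset.sum_add, Multiset.sum_replicate, smul_eq_mul, A.2.2.1]
          omega⟩,
        by
          have hr := hcard A.1 A.2.1 A.2.2.1 A.2.2.2
          simp only [Multiset.card_add, Multiset.card_replicate]
          omega⟩
    invFun := fun p =>
      ⟨p.1.parts.filter (fun a => 2 ≤ a),
        by
          have hones : p.1.parts.filter (fun a => ¬ 2 ≤ a)
              = Multiset.replicate (Multiset.card (p.1.parts.filter (fun a => ¬ 2 ≤ a))) 1 := by
            rw [Multiset.eq_replicate]
            refine ⟨rfl, fun b hb => ?_⟩
            have hb2 := Multiset.of_mem_filter hb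
            have hbpos := p.1.parts_pos (Multiset.mem_of_mem_filter hb)
            omega
          have hsplit := Multiset.filter_add_not (fun a => 2 ≤ a) p.1.parts
          have hcards : Multiset.card (p.1.parts.filter (fun a => 2 ≤ a))
              + Multiset.card (p.1.parts.filter (fun a => ¬ 2 ≤ a)) = k := by
            rw [← Multiset.card_add, hsplit, p.2]
          have h1 : (p.1.parts.filter (fun a => ¬ 2 ≤ a)).sum
              = Multiset.card (p.1.parts.filter (fun a => ¬ 2 ≤ a)) := by
            conv_lhs => rw [hones]
            simp [Multiset.sum_replicate]
          have hsums : (p.1.parts.filter (fun a => 2 ≤ a)).sum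
              + Multiset.card (p.1.parts.filter (fun a => ¬ 2 ≤ a)) = i + k := by
            rw [← h1, ← Multiset.sum_add, hsplit, p.1.parts_sum]
          refine ⟨fun a ha => Multiset.of_mem_filter ha, by omega, by omega⟩⟩
    left_inv := by
      rintro ⟨A, hA⟩
      apply Subtype.ext
      show (A + Multiset.replicate (k - Multiset.card A) 1).filter (fun a => 2 ≤ a) = A
      rw [Multiset.filter_add, Multiset.filter_eq_self.mpr hA.1,
        Multiset.filter_eq_nil.mpr (fun a ha => by
          rw [Multiset.eq_of_mem_replicate ha]; omega), add_zero]
    right_inv := by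
      rintro ⟨p, hp⟩
      apply Subtype.ext
      apply Nat.Partition.ext
      show p.parts.filter (fun a => 2 ≤ a)
          + Multiset.replicate (k - Multiset.card (p.parts.filter (fun a => 2 ≤ a))) 1 = p.parts
      have hones : p.parts.filter (fun a => ¬ 2 ≤ a)
          = Multiset.replicate (Multiset.card (p.parts.filter (fun a => ¬ 2 ≤ a))) 1 := by
        rw [Multiset.eq_replicate]
        refine ⟨rfl, fun b hb => ?_⟩
        have hb2 := Multiset.of_mem_filter hb
        have hbpos := p.parts_pos (Multiset.mem_of_mem_filter hb)
        omega
      have hcards : Multiset.card (p.parts.filter (fun a => 2 ≤ a))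
          + Multiset.card (p.parts.filter (fun a => ¬ 2 ≤ a)) = k := by
        rw [← Multiset.card_add, Multiset.filter_add_not, hp]
      have : k - Multiset.card (p.parts.filter (fun a => 2 ≤ a))
          = Multiset.card (p.parts.filter (fun a => ¬ 2 ≤ a)) := by omega
      rw [this, ← hones, Multiset.filter_add_not] }
  rw [← Nat.card_coe_set_eq]
  have : Nat.card {A : Multiset ℕ | (∀ a ∈ A, 2 ≤ a) ∧
      A.sum = i + Multiset.card A ∧ A.sum ≤ n}
      = Nat.card {p : Nat.Partition (i + k) // p.parts.card = k} := Nat.card_congr e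
  rw [this, Nat.card_eq_fintype_card, Fintype.card_subtype, P]
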